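/- arXiv:2104.00003 — 3 statements merged into one kernel-verified Lean document; each statement's English description precedes it below -/
import Mathlib

section
/- (Monotonicity of the dynamical coherence measure.) Let C be a real-valued function on d×d complex matrices that is bounded on the set D of density matrices. If Φ₁ and Φ₂ are quantum channels that are CMIO for C, then for every quantum channel Θ one has 𝔠_C(Φ₁ ∘ Θ ∘ Φ₂) ≤ 𝔠_C(Θ). -/
open Matrix ComplexOrder

/-- A density matrix: positive semidefinite with trace 1. -/
def IsDensity (d : ℕ) (ρ : Matrix (Fin d) (Fin d) ℂ) : Prop :=
  ρ.PosSemidef ∧ ρ.trace = 1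

/-- A quantum channel: a map admitting a Kraus decomposition. -/
def IsChannel (d : ℕ) (Λ : Matrix (Fin d) (Fin d) ℂ → Matrix (Fin d) (Fin d) ℂ) : Prop :=
  ∃ (m : ℕ) (K : Fin m → Matrix (Fin d) (Fin d) ℂ),
    (∀ ρ, Λ ρ = ∑ i, K i * ρ * (K i)ᴴ) ∧ (∑ i, (K i)ᴴ * K i) = 1

/-- A channel is an incoherent operation induced by the coherence measure `C` (CMIO for `C`)
if it does not increase `C` on any density matrix. -/
def IsCMIO (d : ℕ) (C : Matrix (Fin d) (Fin d) ℂ → ℝ)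
    (Λ : Matrix (Fin d) (Fin d) ℂ → Matrix (Fin d) (Fin d) ℂ) : Prop :=
  ∀ ρ, IsDensity d ρ → C (Λ ρ) ≤ C ρ

/-- `C` is bounded on the set of density matrices. -/
def BoundedOnD (d : ℕ) (C : Matrix (Fin d) (Fin d) ℂ → ℝ) : Prop :=
  ∃ M : ℝ, ∀ ρ, IsDensity d ρ → |C ρ| ≤ M

/-- `C` is convex on density matrices. -/
def ConvexOnD (d : ℕ) (C : Matrix (Fin d) (Fin d) ℂ → ℝ) : Prop :=
  ∀ t : ℝ, t ∈ Set.Icc (0 : ℝ) 1 → ∀ ρ σ : Matrix (Fin d) (Fin d) ℂ,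
    IsDensity d ρ → IsDensity d σ →
    C (t • ρ + (1 - t) • σ) ≤ t * C ρ + (1 - t) * C σ

/-- The power of the channel `Θ` over the channel `Λ`:
`P_C(Θ; Λ) = sup_{ρ ∈ D} (C(Θ(ρ)) − C(Λ(ρ)))`. -/
noncomputable def power (d : ℕ) (C : Matrix (Fin d) (Fin d) ℂ → ℝ)
    (Θ Λ : Matrix (Fin d) (Fin d) ℂ → Matrix (Fin d) (Fin d) ℂ) : ℝ :=
  sSup ((fun ρ => C (Θ ρ) - C (Λ ρ)) '' {ρ | IsDensity d ρ})

/-- The dynamical coherence measure `𝔠_C(Θ) = inf_{Λ channel, CMIO for C} |P_C(Θ; Λ)|`. -/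
noncomputable def dynCoh (d : ℕ) (C : Matrix (Fin d) (Fin d) ℂ → ℝ)
    (Θ : Matrix (Fin d) (Fin d) ℂ → Matrix (Fin d) (Fin d) ℂ) : ℝ :=
  sInf ((fun Λ => |power d C Θ Λ|) '' {Λ | IsChannel d Λ ∧ IsCMIO d C Λ})


section Stmt8Aux

variable {d : ℕ}


lemma psd_smul {ρ : Matrix (Fin d) (Fin d) ℂ} (hρ : ρ.PosSemidef) {c : ℝ} (hc : 0 ≤ c) :
    ((c : ℂ) • ρ).PosSemidef := by
  constructor
  · unfold Matrix.IsHermitian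
    rw [conjTranspose_smul, hρ.1.eq]
    congr 1
    simp
  · intro x
    have hc' : 0 ≤ (c : ℂ) := by
      rw [Complex.zero_le_real]; exact hc
    exact (hρ.smul hc').2 x

lemma psd_sum {ι : Type*} (s : Finset ι) (f : ι → Matrix (Fin d) (Fin d) ℂ)
    (h : ∀ i ∈ s, (f i).PosSemidef) : (∑ i ∈ s, f i).PosSemidef :=
  Finset.sum_induction f _ (fun _ _ ha hb => ha.add hb) .zero h


lemma channel_density {Λ} (hΛ : IsChannel d Λ) {ρ} (hρ : IsDensity d ρ) :
    IsDensity d (Λ ρ) := by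
  obtain ⟨m, K, hK, hK1⟩ := hΛ
  constructor
  · rw [hK]
    exact psd_sum _ _ (fun i _ => hρ.1.mul_mul_conjTranspose_same (K i))
  · rw [hK, trace_sum]
    have h1 : ∀ i : Fin m, (K i * ρ * (K i)ᴴ).trace = ((K i)ᴴ * K i * ρ).trace := by
      intro i; rw [Matrix.trace_mul_cycle]
    rw [Finset.sum_congr rfl fun i _ => h1 i, ← trace_sum, ← Finset.sum_mul, hK1, one_mul, hρ.2]

lemma channel_id : IsChannel d id := by
  refine ⟨1, fun _ => 1, fun ρ => by simp, by simp⟩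

lemma channel_comp {Λ Φ} (hΛ : IsChannel d Λ) (hΦ : IsChannel d Φ) :
    IsChannel d (Λ ∘ Φ) := by
  obtain ⟨m, K, hK, hK1⟩ := hΛ
  obtain ⟨p, L, hL, hL1⟩ := hΦ
  refine ⟨m * p, fun k => K (finProdFinEquiv.symm k).1 * L (finProdFinEquiv.symm k).2, ?_, ?_⟩
  · intro ρ
    rw [Function.comp_apply, hK, hL]
    rw [← (finProdFinEquiv (m := m) (n := p)).sum_comp]
    simp only [Equiv.symm_apply_apply]
    rw [Fintype.sum_prod_type]
    refine Finset.sum_congr rfl fun i _ => ?_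
    rw [Finset.mul_sum, Finset.sum_mul]
    refine Finset.sum_congr rfl fun j _ => ?_
    simp only [conjTranspose_mul]
    noncomm_ring
  · rw [← (finProdFinEquiv (m := m) (n := p)).sum_comp]
    simp only [Equiv.symm_apply_apply]
    rw [Fintype.sum_prod_type_right]
    calc (∑ j : Fin p, ∑ i : Fin m, (K i * L j)ᴴ * (K i * L j))
        = ∑ j : Fin p, (L j)ᴴ * (∑ i, (K i)ᴴ * K i) * L j := by
          refine Finset.sum_congr rfl fun j _ => ?_
          rw [Finset.mul_sum, Finset.sum_mul]
          refine Finset.sum_congr rfl fun i _ => ?_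
          simp only [conjTranspose_mul]
          noncomm_ring
      _ = 1 := by rw [hK1]; simpa using hL1

lemma channel_continuous {Λ} (hΛ : IsChannel d Λ) : Continuous Λ := by
  obtain ⟨m, K, hK, -⟩ := hΛ
  have h : Λ = fun ρ => ∑ i, K i * ρ * (K i)ᴴ := funext hK
  rw [h]
  exact continuous_finset_sum _ fun i _ =>
    (continuous_const.matrix_mul continuous_id).matrix_mul continuous_const



lemma density_entry_norm_le {ρ : Matrix (Fin d) (Fin d) ℂ} (hρ : IsDensity d ρ)
    (i j : Fin d) : ‖ρ i j‖ ≤ 1 := by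
  obtain ⟨B, hB⟩ : ∃ B : Matrix (Fin d) (Fin d) ℂ, ρ = Bᴴ * B := by
    classical
    open scoped MatrixOrder in
    obtain ⟨B, hB⟩ := CStarAlgebra.nonneg_iff_eq_star_mul_self.mp hρ.1.nonneg
    exact ⟨B, hB⟩
  -- columns of B as Euclidean vectors
  set v : Fin d → EuclideanSpace ℂ (Fin d) := fun i => WithLp.toLp 2 (fun k => B k i) with hv
  have hentry : ∀ i j, ρ i j = inner ℂ (v i) (v j) := by
    intro i j
    rw [hB]
    simp [Matrix.mul_apply, PiLp.inner_apply, v, mul_comm]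
  have hnorm_sq : ∀ i, (‖v i‖ : ℝ) ^ 2 = (ρ i i).re := by
    intro i
    rw [hentry i i, ← inner_self_eq_norm_sq (𝕜 := ℂ)]
    rfl
  have htrace : ∑ k, (ρ k k).re = 1 := by
    have := congrArg Complex.re hρ.2
    simpa [Matrix.trace, Matrix.diag] using this
  have hle1 : ∀ i, ‖v i‖ ≤ 1 := by
    intro i
    have h1 : (‖v i‖ : ℝ) ^ 2 ≤ 1 := by
      rw [hnorm_sq]
      rw [← htrace]
      exact Finset.single_le_sum (f := fun k => (ρ k k).re)
        (fun k _ => show (0:ℝ) ≤ (ρ k k).re from (hnorm_sq k) ▸ sq_nonneg ‖v k‖) (Finset.mem_univ i)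
    nlinarith [norm_nonneg (v i)]
  calc ‖ρ i j‖ = ‖(inner ℂ (v i) (v j) : ℂ)‖ := by rw [hentry]
    _ ≤ ‖v i‖ * ‖v j‖ := norm_inner_le_norm _ _
    _ ≤ 1 := mul_le_one₀ (hle1 i) (norm_nonneg _) (hle1 j)

lemma isClosed_density : IsClosed {ρ : Matrix (Fin d) (Fin d) ℂ | IsDensity d ρ} := by
  have hcoord : ∀ i j, Continuous fun ρ : Matrix (Fin d) (Fin d) ℂ => ρ i j := by
    intro i j
    exact (continuous_apply j).comp (continuous_apply i)
  have h1 : IsClosed {ρ : Matrix (Fin d) (Fin d) ℂ | ρ.IsHermitian} := by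
    have : {ρ : Matrix (Fin d) (Fin d) ℂ | ρ.IsHermitian}
        = ⋂ i, ⋂ j, {ρ | (starRingEnd ℂ) (ρ j i) = ρ i j} := by
      ext ρ
      simp only [Set.mem_setOf_eq, Set.mem_iInter]
      constructor
      · intro h i j; exact congrFun (congrFun h.eq i) j
      · intro h; ext i j; exact h i j
    rw [this]
    refine isClosed_iInter fun i => isClosed_iInter fun j => ?_
    exact isClosed_eq (Complex.continuous_conj.comp (hcoord j i)) (hcoord i j)
  have h2 : IsClosed {ρ : Matrix (Fin d) (Fin d) ℂ | ∀ x : Fin d → ℂ, 0 ≤ star x ⬝ᵥ ρ *ᵥ x} := by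
    have : {ρ : Matrix (Fin d) (Fin d) ℂ | ∀ x : Fin d → ℂ, 0 ≤ star x ⬝ᵥ ρ *ᵥ x}
        = ⋂ x : Fin d → ℂ, {ρ | 0 ≤ star x ⬝ᵥ ρ *ᵥ x} := by
      ext ρ; simp [Set.mem_iInter]
    rw [this]
    refine isClosed_iInter fun x => ?_
    have hc : Continuous fun ρ : Matrix (Fin d) (Fin d) ℂ => star x ⬝ᵥ ρ *ᵥ x := by
      simp only [dotProduct, mulVec]
      refine continuous_finset_sum _ fun k _ => Continuous.mul continuous_const ?_
      exact continuous_finset_sum _ fun l _ => ((hcoord k l).mul continuous_const)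
    have hclosed : IsClosed {z : ℂ | 0 ≤ z} := by
      have : {z : ℂ | 0 ≤ z} = Complex.re ⁻¹' Set.Ici 0 ∩ Complex.im ⁻¹' {0} := by
        ext z
        simp [Complex.le_def, eq_comm]
      rw [this]
      exact (isClosed_Ici.preimage Complex.continuous_re).inter
        (isClosed_singleton.preimage Complex.continuous_im)
    exact hclosed.preimage hc
  have h3 : IsClosed {ρ : Matrix (Fin d) (Fin d) ℂ | ρ.trace = 1} := by
    have hc : Continuous fun ρ : Matrix (Fin d) (Fin d) ℂ => ρ.trace := by
      simp only [Matrix.trace, Matrix.diag]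
      exact continuous_finset_sum _ fun k _ => hcoord k k
    exact isClosed_eq hc continuous_const
  have : {ρ : Matrix (Fin d) (Fin d) ℂ | IsDensity d ρ}
      = ({ρ | ρ.IsHermitian} ∩ {ρ | ∀ x, 0 ≤ star x ⬝ᵥ ρ *ᵥ x}) ∩ {ρ | ρ.trace = 1} := by
    ext ρ
    simp only [Set.mem_setOf_eq, Set.mem_inter_iff]
    exact ⟨fun h => ⟨⟨h.1.1, (posSemidef_iff_dotProduct_mulVec.mp h.1).2⟩, h.2⟩,
      fun h => ⟨posSemidef_iff_dotProduct_mulVec.mpr ⟨h.1.1, h.1.2⟩, h.2⟩⟩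
  rw [this]
  exact ((h1.inter h2).inter h3)

lemma isCompact_density : IsCompact {ρ : Matrix (Fin d) (Fin d) ℂ | IsDensity d ρ} := by
  have hsub : {ρ : Matrix (Fin d) (Fin d) ℂ | IsDensity d ρ}
      ⊆ Set.univ.pi fun _ : Fin d => Set.univ.pi fun _ : Fin d => Metric.closedBall (0 : ℂ) 1 := by
    intro ρ hρ
    intro i _
    intro j _
    simpa using density_entry_norm_le hρ i j
  have hcomp : IsCompact (Set.univ.pi fun _ : Fin d =>
      Set.univ.pi fun _ : Fin d => Metric.closedBall (0 : ℂ) 1) :=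
    isCompact_univ_pi fun _ => isCompact_univ_pi fun _ => isCompact_closedBall 0 1
  exact hcomp.of_isClosed_subset isClosed_density hsub

open Filter Topology

instance : FirstCountableTopology (Matrix (Fin d) (Fin d) ℂ) :=
  inferInstanceAs (FirstCountableTopology (Fin d → Fin d → ℂ))
instance : T2Space (Matrix (Fin d) (Fin d) ℂ) :=
  inferInstanceAs (T2Space (Fin d → Fin d → ℂ))

lemma exists_fixed_density {Λ} (hΛ : IsChannel d Λ) {ρ₀} (h₀ : IsDensity d ρ₀) :
    ∃ ρ, IsDensity d ρ ∧ Λ ρ = ρ := by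
  obtain ⟨m, K, hK, hK1⟩ := id hΛ
  have hsmul : ∀ (a : ℂ) (A), Λ (a • A) = a • Λ A := by
    intro a A
    simp only [hK, Matrix.mul_smul, Matrix.smul_mul, Finset.smul_sum]
  have hsum : ∀ (n : ℕ) (g : ℕ → Matrix (Fin d) (Fin d) ℂ),
      Λ (∑ k ∈ Finset.range n, g k) = ∑ k ∈ Finset.range n, Λ (g k) := by
    intro n g
    simp only [hK, Finset.mul_sum, Finset.sum_mul]
    rw [Finset.sum_comm]
  set f : ℕ → Matrix (Fin d) (Fin d) ℂ := fun k => Λ^[k] ρ₀ with hf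
  have hfD : ∀ k, IsDensity d (f k) := by
    intro k
    induction k with
    | zero => exact h₀
    | succ k ih =>
        show IsDensity d (Λ^[k + 1] ρ₀)
        rw [Function.iterate_succ_apply']
        exact channel_density hΛ ih
  set c : ℕ → ℝ := fun n => ((n : ℝ) + 1)⁻¹ with hc
  have hcpos : ∀ n, 0 < c n := fun n => by positivity
  set x : ℕ → Matrix (Fin d) (Fin d) ℂ :=
    fun n => ((c n : ℂ)) • ∑ k ∈ Finset.range (n + 1), f k with hx
  have hxD : ∀ n, IsDensity d (x n) := by
    intro n
    constructor
    · exact psd_smul (psd_sum _ _ fun k _ => (hfD k).1) (hcpos n).le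
    · rw [hx]
      simp only [trace_smul, trace_sum]
      rw [Finset.sum_congr rfl fun k _ => (hfD k).2]
      simp only [Finset.sum_const, Finset.card_range, nsmul_eq_mul, mul_one, smul_eq_mul]
      rw [hc]
      push_cast
      field_simp
  have hdiff : ∀ n, Λ (x n) = x n + (c n : ℂ) • (f (n + 1) - ρ₀) := by
    intro n
    rw [hx, hsmul, hsum]
    have hstep : ∀ k, Λ (f k) = f (k + 1) := by
      intro k
      rw [hf]
      exact (Function.iterate_succ_apply' Λ k ρ₀).symm
    rw [Finset.sum_congr rfl fun k _ => hstep k]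
    have htel : (∑ k ∈ Finset.range (n + 1), f (k + 1))
        = (∑ k ∈ Finset.range (n + 1), f k) + (f (n + 1) - f 0) := by
      have h := Finset.sum_range_sub f (n + 1)
      rw [Finset.sum_sub_distrib] at h
      have := sub_eq_iff_eq_add.mp h
      rw [this]; abel
    rw [htel, smul_add]
    simp [f]
  -- the error terms tend to zero
  have herr : Tendsto (fun n => (c n : ℂ) • (f (n + 1) - ρ₀)) atTop (𝓝 0) := by
    apply tendsto_pi_nhds.mpr
    intro i
    rw [tendsto_pi_nhds]
    intro j
    have h0 : (0 : Matrix (Fin d) (Fin d) ℂ) i j = 0 := rfl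
    rw [h0]
    apply squeeze_zero_norm (a := fun n => 2 * c n)
    · intro n
      have : ((c n : ℂ) • (f (n + 1) - ρ₀)) i j = (c n : ℂ) * ((f (n + 1)) i j - ρ₀ i j) := by
        simp [Matrix.smul_apply, Matrix.sub_apply]
      rw [this, norm_mul]
      have h1 : ‖(c n : ℂ)‖ = c n := by
        rw [Complex.norm_real, Real.norm_eq_abs, abs_of_pos (hcpos n)]
      rw [h1]
      have h2 : ‖(f (n + 1)) i j - ρ₀ i j‖ ≤ 2 := by
        calc ‖(f (n + 1)) i j - ρ₀ i j‖ ≤ ‖(f (n + 1)) i j‖ + ‖ρ₀ i j‖ := norm_sub_le _ _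
          _ ≤ 1 + 1 := add_le_add (density_entry_norm_le (hfD (n+1)) i j)
              (density_entry_norm_le h₀ i j)
          _ = 2 := by norm_num
      calc c n * ‖(f (n + 1)) i j - ρ₀ i j‖ ≤ c n * 2 :=
            mul_le_mul_of_nonneg_left h2 (hcpos n).le
        _ = 2 * c n := by ring
    · have := tendsto_one_div_add_atTop_nhds_zero_nat (𝕜 := ℝ)
      have h2 := this.const_mul (2 : ℝ)
      simpa [hc, one_div, mul_comm] using h2
  obtain ⟨ρs, hρsD, φ, hφ, hconv⟩ := isCompact_density.tendsto_subseq hxD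
  refine ⟨ρs, hρsD, ?_⟩
  have h1 : Tendsto (fun n => Λ (x (φ n))) atTop (𝓝 (Λ ρs)) :=
    ((channel_continuous hΛ).tendsto ρs).comp hconv
  have h2 : Tendsto (fun n => Λ (x (φ n))) atTop (𝓝 ρs) := by
    have := hconv.add (herr.comp hφ.tendsto_atTop)
    rw [add_zero] at this
    refine this.congr fun n => ?_
    exact (hdiff (φ n)).symm
  exact tendsto_nhds_unique h1 h2

end Stmt8Aux

theorem stmt8 (d : ℕ) (C : Matrix (Fin d) (Fin d) ℂ → ℝ) (hb : BoundedOnD d C)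
    (Φ₁ Φ₂ Θ : Matrix (Fin d) (Fin d) ℂ → Matrix (Fin d) (Fin d) ℂ)
    (hΦ₁ : IsChannel d Φ₁) (hΦ₂ : IsChannel d Φ₂)
    (hc₁ : IsCMIO d C Φ₁) (hc₂ : IsCMIO d C Φ₂) (hΘ : IsChannel d Θ) :
    dynCoh d C (Φ₁ ∘ Θ ∘ Φ₂) ≤ dynCoh d C Θ := by
  obtain ⟨M, hM⟩ := hb
  have hRne : ((fun Λ => |power d C Θ Λ|) '' {Λ | IsChannel d Λ ∧ IsCMIO d C Λ}).Nonempty :=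
    ⟨_, ⟨id, ⟨channel_id, fun ρ _ => le_rfl⟩, rfl⟩⟩
  refine le_csInf hRne ?_
  rintro b ⟨Λ, ⟨hΛchan, hΛcmio⟩, rfl⟩
  have hΛ'chan : IsChannel d (Λ ∘ Φ₂) := channel_comp hΛchan hΦ₂
  have hΛ'cmio : IsCMIO d C (Λ ∘ Φ₂) := fun ρ hρ =>
    le_trans (hΛcmio _ (channel_density hΦ₂ hρ)) (hc₂ ρ hρ)
  have hbddL : BddBelow ((fun Λ => |power d C (Φ₁ ∘ Θ ∘ Φ₂) Λ|) ''
      {Λ | IsChannel d Λ ∧ IsCMIO d C Λ}) := by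
    refine ⟨0, ?_⟩
    rintro x ⟨g, -, rfl⟩
    exact abs_nonneg _
  have hmemL : |power d C (Φ₁ ∘ Θ ∘ Φ₂) (Λ ∘ Φ₂)| ∈ (fun Λ => |power d C (Φ₁ ∘ Θ ∘ Φ₂) Λ|) ''
      {Λ | IsChannel d Λ ∧ IsCMIO d C Λ} := ⟨_, ⟨hΛ'chan, hΛ'cmio⟩, rfl⟩
  refine (csInf_le hbddL hmemL).trans ?_
  by_cases hDne : {ρ : Matrix (Fin d) (Fin d) ℂ | IsDensity d ρ}.Nonempty
  · set A := (fun ρ => C (Θ ρ) - C (Λ ρ)) '' {ρ | IsDensity d ρ} with hA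
    set A' := (fun ρ => C ((Φ₁ ∘ Θ ∘ Φ₂) ρ) - C ((Λ ∘ Φ₂) ρ)) '' {ρ | IsDensity d ρ} with hA'
    have hbA : BddAbove A := by
      refine ⟨2 * M, ?_⟩
      rintro x ⟨ρ, hρ, rfl⟩
      have h1 := abs_le.mp (hM (Θ ρ) (channel_density hΘ hρ))
      have h2 := abs_le.mp (hM (Λ ρ) (channel_density hΛchan hρ))
      simp only []
      linarith
    have hbA' : BddAbove A' := by
      refine ⟨2 * M, ?_⟩
      rintro x ⟨ρ, hρ, rfl⟩
      have h1 := abs_le.mp (hM ((Φ₁ ∘ Θ ∘ Φ₂) ρ)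
        (channel_density hΦ₁ (channel_density hΘ (channel_density hΦ₂ hρ))))
      have h2 := abs_le.mp (hM ((Λ ∘ Φ₂) ρ) (channel_density hΛchan (channel_density hΦ₂ hρ)))
      simp only []
      linarith
    have hP'leP : power d C (Φ₁ ∘ Θ ∘ Φ₂) (Λ ∘ Φ₂) ≤ power d C Θ Λ := by
      refine csSup_le (hDne.image _) ?_
      rintro x ⟨ρ, hρ, rfl⟩
      have h1 : C (Φ₁ (Θ (Φ₂ ρ))) ≤ C (Θ (Φ₂ ρ)) :=
        hc₁ _ (channel_density hΘ (channel_density hΦ₂ hρ))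
      have h2 : C (Θ (Φ₂ ρ)) - C (Λ (Φ₂ ρ)) ≤ power d C Θ Λ :=
        le_csSup hbA ⟨Φ₂ ρ, channel_density hΦ₂ hρ, rfl⟩
      simp only [Function.comp_apply]
      linarith [h1, h2]
    have hP'nonneg : 0 ≤ power d C (Φ₁ ∘ Θ ∘ Φ₂) (Λ ∘ Φ₂) := by
      obtain ⟨ρ₀, h₀⟩ := hDne
      obtain ⟨ρs, hρsD, hfix⟩ :=
        exists_fixed_density (channel_comp hΦ₁ (channel_comp hΘ hΦ₂)) h₀
      have h3 : C ((Λ ∘ Φ₂) ρs) ≤ C ρs := hΛ'cmio ρs hρsD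
      have helem : C ((Φ₁ ∘ Θ ∘ Φ₂) ρs) - C ((Λ ∘ Φ₂) ρs) ≤
          power d C (Φ₁ ∘ Θ ∘ Φ₂) (Λ ∘ Φ₂) := le_csSup hbA' ⟨ρs, hρsD, rfl⟩
      have h4 : C ((Φ₁ ∘ Θ ∘ Φ₂) ρs) = C ρs := by rw [hfix]
      linarith
    rw [abs_of_nonneg hP'nonneg]
    exact hP'leP.trans (le_abs_self _)
  · have hempty : {ρ : Matrix (Fin d) (Fin d) ℂ | IsDensity d ρ} = ∅ :=
      Set.not_nonempty_iff_eq_empty.mp hDne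
    have : power d C (Φ₁ ∘ Θ ∘ Φ₂) (Λ ∘ Φ₂) = 0 := by
      rw [power, hempty, Set.image_empty, Real.sSup_empty]
    rw [this, abs_zero]
    exact abs_nonneg _
end

section
/- Let ψ, ψ' be orthonormal vectors in ℂ², let λ ∈ [0,1], and set ρ = λ|ψ⟩⟨ψ| + (1−λ)|ψ'⟩⟨ψ'|. Then C_{E,r}(ρ) ≥ 1, with equality if and only if ρ = I/2 (half the identity matrix). In particular, no qubit density matrix satisfies C_{E,r}(ρ) = 0, i.e. no POVM-based incoherent state for E exists. -/
open Matrix ComplexOrder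

/-- The POVM vectors `|φ_k⟩ = (|0⟩ + i^k |1⟩)/√2` for `k = 0,1,2,3`. -/
noncomputable def phiv (k : Fin 4) : Fin 2 → ℂ :=
  ![(1 : ℂ) / Real.sqrt 2, Complex.I ^ (k : ℕ) / Real.sqrt 2]

/-- The outer product `|ψ⟩⟨ψ|`. -/
def outer (ψ : Fin 2 → ℂ) : Matrix (Fin 2) (Fin 2) ℂ :=
  vecMulVec ψ (star ψ)

/-- The POVM outcome probabilities `p_k(ρ) = (1/2)⟨φ_k|ρ|φ_k⟩`. -/
noncomputable def pk (ρ : Matrix (Fin 2) (Fin 2) ℂ) (k : Fin 4) : ℝ :=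
  (star (phiv k) ⬝ᵥ ρ.mulVec (phiv k)).re / 2

/-- `-x log₂ x`, with the convention `0 log₂ 0 = 0`. -/
noncomputable def ent2 (x : ℝ) : ℝ := -(x * Real.logb 2 x)

/-- The Shannon entropy (base 2) of the POVM outcome distribution of `ρ`. -/
noncomputable def H4 (ρ : Matrix (Fin 2) (Fin 2) ℂ) : ℝ := ∑ k : Fin 4, ent2 (pk ρ k)

/-- The binary entropy `h(λ)` (base 2). -/
noncomputable def binEnt (l : ℝ) : ℝ := ent2 l + ent2 (1 - l)

/-- A qubit density matrix: positive semidefinite with trace 1. -/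
def IsDensity2 (ρ : Matrix (Fin 2) (Fin 2) ℂ) : Prop :=
  ρ.PosSemidef ∧ ρ.trace = 1

/- ### Auxiliary real-analysis lemmas -/

lemma bE_symm_abs (v : ℝ) : Real.binEntropy (1/2 + v) = Real.binEntropy (1/2 - |v|) := by
  rcases abs_cases v with ⟨hv', _⟩ | ⟨hv', _⟩
  · rw [show (1:ℝ)/2 = 2⁻¹ by norm_num, Real.binEntropy_two_inv_add, hv']
  · rw [hv']; ring_nf

lemma bE_mono (u v : ℝ) (h : |u| ≤ |v|) (hv : |v| ≤ 1/2) :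
    Real.binEntropy (1/2 + v) ≤ Real.binEntropy (1/2 + u) := by
  rw [bE_symm_abs, bE_symm_abs]
  have := abs_nonneg u
  exact Real.binEntropy_strictMonoOn.monotoneOn
    (Set.mem_Icc.2 ⟨by linarith, by rw [show (2:ℝ)⁻¹ = 1/2 by norm_num]; linarith⟩)
    (Set.mem_Icc.2 ⟨by linarith, by rw [show (2:ℝ)⁻¹ = 1/2 by norm_num]; linarith⟩) (by linarith)

lemma bE_strict (u v : ℝ) (h : |u| < |v|) (hv : |v| ≤ 1/2) :
    Real.binEntropy (1/2 + v) < Real.binEntropy (1/2 + u) := by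
  rw [bE_symm_abs, bE_symm_abs]
  have := abs_nonneg u
  exact Real.binEntropy_strictMonoOn
    (Set.mem_Icc.2 ⟨by linarith, by rw [show (2:ℝ)⁻¹ = 1/2 by norm_num]; linarith⟩)
    (Set.mem_Icc.2 ⟨by linarith, by rw [show (2:ℝ)⁻¹ = 1/2 by norm_num]; linarith⟩) (by linarith)

lemma ent2_eq (x : ℝ) : ent2 x = (x * Real.log x⁻¹) / Real.log 2 := by
  simp [ent2, Real.logb, Real.log_inv]; ring

lemma binEnt_eq (l : ℝ) : binEnt l = Real.binEntropy l / Real.log 2 := by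
  simp [binEnt, ent2_eq, Real.binEntropy]; ring

lemma ent2_half (q : ℝ) : ent2 (q/2) = q/2 + (q * Real.log q⁻¹)/(2*Real.log 2) := by
  rcases eq_or_ne q 0 with h | h
  · simp [h, ent2]
  · have h2 : Real.log 2 ≠ 0 := by positivity
    rw [ent2_eq]
    rw [show (q/2)⁻¹ = 2 / q by field_simp, Real.log_div two_ne_zero h, Real.log_inv]
    field_simp; ring

lemma pair_sum (s : ℝ) :
    ent2 (1/4 + s) + ent2 (1/4 - s)
      = 1/2 + Real.binEntropy (1/2 + 2*s) / (2 * Real.log 2) := by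
  have e1 : (1:ℝ)/4 + s = (1/2 + 2*s)/2 := by ring
  have e2 : (1:ℝ)/4 - s = (1/2 - 2*s)/2 := by ring
  rw [e1, e2, ent2_half, ent2_half, Real.binEntropy]
  rw [show (1:ℝ) - (1/2 + 2*s) = 1/2 - 2*s by ring]
  ring

/- ### Auxiliary matrix lemmas -/

lemma completeness (ψ ψ' : Fin 2 → ℂ) (hψ : star ψ ⬝ᵥ ψ = 1) (hψ' : star ψ' ⬝ᵥ ψ' = 1)
    (horth : star ψ ⬝ᵥ ψ' = 0) : outer ψ + outer ψ' = 1 := by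
  have e1 : (starRingEnd ℂ) (ψ 0) * ψ 0 + (starRingEnd ℂ) (ψ 1) * ψ 1 = 1 := by
    simpa [dotProduct, Fin.sum_univ_two] using hψ
  have e2 : (starRingEnd ℂ) (ψ' 0) * ψ' 0 + (starRingEnd ℂ) (ψ' 1) * ψ' 1 = 1 := by
    simpa [dotProduct, Fin.sum_univ_two] using hψ'
  have e3 : (starRingEnd ℂ) (ψ 0) * ψ' 0 + (starRingEnd ℂ) (ψ 1) * ψ' 1 = 0 := by
    simpa [dotProduct, Fin.sum_univ_two] using horth
  have e4 : (starRingEnd ℂ) (ψ' 0) * ψ 0 + (starRingEnd ℂ) (ψ' 1) * ψ 1 = 0 := by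
    have := congrArg (starRingEnd ℂ) e3
    simp only [map_add, RingHom.map_mul, Complex.conj_conj, map_zero] at this
    linear_combination this
  set U : Matrix (Fin 2) (Fin 2) ℂ := Matrix.of ![![ψ 0, ψ' 0], ![ψ 1, ψ' 1]] with hU
  have h1 : Uᴴ * U = 1 := by
    ext i j
    fin_cases i <;> fin_cases j <;>
      simp [hU, Matrix.mul_apply, Fin.sum_univ_two, Matrix.conjTranspose_apply,
        Matrix.one_apply] <;>
      first
        | linear_combination e1 | linear_combination e2
        | linear_combination e3 | linear_combination e4
  have h2 : U * Uᴴ = 1 := mul_eq_one_comm.mp h1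
  ext i j
  have := congrFun (congrFun h2 i) j
  fin_cases i <;> fin_cases j <;>
    simp [hU, Matrix.mul_apply, Fin.sum_univ_two, Matrix.conjTranspose_apply,
      Matrix.one_apply, outer, vecMulVec, Matrix.add_apply] at this ⊢ <;>
    linear_combination this

lemma quad (M : Matrix (Fin 2) (Fin 2) ℂ) (k : Fin 4) :
    star (phiv k) ⬝ᵥ M.mulVec (phiv k) =
      (M 0 0 + M 1 1 + Complex.I ^ (k : ℕ) * M 0 1
        + (starRingEnd ℂ) (Complex.I ^ (k : ℕ)) * M 1 0) / 2 := by
  have h2 : (Real.sqrt 2 : ℂ) * (Real.sqrt 2 : ℂ) = 2 := by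
    rw [← Complex.ofReal_mul, Real.mul_self_sqrt (by norm_num : (0:ℝ) ≤ 2)]; norm_num
  have hs : (Real.sqrt 2 : ℂ)⁻¹ * (Real.sqrt 2 : ℂ)⁻¹ = 1/2 := by
    rw [← mul_inv, h2]; norm_num
  have hI : Complex.I ^ 2 = -1 := Complex.I_sq
  fin_cases k
  · simp only [phiv, dotProduct, mulVec, Fin.sum_univ_two, Pi.star_apply,
      Matrix.cons_val_zero, Matrix.cons_val_one, Matrix.head_cons, map_div₀,
      Complex.conj_ofReal, RCLike.star_def, map_pow, Complex.conj_I, Fin.isValue]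
    norm_num
    linear_combination (M 0 0 + M 0 1 + M 1 0 + M 1 1) * hs
  · simp only [phiv, dotProduct, mulVec, Fin.sum_univ_two, Pi.star_apply,
      Matrix.cons_val_zero, Matrix.cons_val_one, Matrix.head_cons, map_div₀,
      Complex.conj_ofReal, RCLike.star_def, map_pow, Complex.conj_I, Fin.isValue]
    norm_num
    linear_combination (M 0 0 + Complex.I * M 0 1 - Complex.I * M 1 0
      - Complex.I^2 * M 1 1) * hs + (-(M 1 1)/2) * hI
  · simp only [phiv, dotProduct, mulVec, Fin.sum_univ_two, Pi.star_apply,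
      Matrix.cons_val_zero, Matrix.cons_val_one, Matrix.head_cons, map_div₀,
      Complex.conj_ofReal, RCLike.star_def, map_pow, Complex.conj_I, Fin.isValue]
    norm_num
    linear_combination (M 0 0 - M 0 1 - M 1 0 + M 1 1) * hs
  · simp only [phiv, dotProduct, mulVec, Fin.sum_univ_two, Pi.star_apply,
      Matrix.cons_val_zero, Matrix.cons_val_one, Matrix.head_cons, map_div₀,
      Complex.conj_ofReal, RCLike.star_def, map_pow, Complex.conj_I, Fin.isValue]
    norm_num
    linear_combination (M 0 0 + Complex.I^3 * M 0 1 - Complex.I^3 * M 1 0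
      - Complex.I^6 * M 1 1) * hs + (-(M 1 1)/2 * (Complex.I^4 - Complex.I^2 + 1)) * hI
      + ((M 0 1 / 2 - ((Real.sqrt 2 : ℂ))⁻¹ ^ 2 * M 0 1) * Complex.I
        + ((Real.sqrt 2 : ℂ))⁻¹ ^ 2 * Complex.I ^ 4 * M 1 1) * hI

set_option maxHeartbeats 1000000 in
theorem stmt14 (ψ ψ' : Fin 2 → ℂ) (hψ : star ψ ⬝ᵥ ψ = 1) (hψ' : star ψ' ⬝ᵥ ψ' = 1)
    (horth : star ψ ⬝ᵥ ψ' = 0) (l : ℝ) (hl : l ∈ Set.Icc (0 : ℝ) 1)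
    (ρ : Matrix (Fin 2) (Fin 2) ℂ) (hρ : ρ = l • outer ψ + (1 - l) • outer ψ') :
    (1 ≤ H4 ρ - binEnt l ∧
      (H4 ρ - binEnt l = 1 ↔ ρ = (1 / 2 : ℂ) • (1 : Matrix (Fin 2) (Fin 2) ℂ))) ∧
      H4 ρ - binEnt l ≠ 0 := by
  obtain ⟨hl0, hl1⟩ := hl
  have e1 : (starRingEnd ℂ) (ψ 0) * ψ 0 + (starRingEnd ℂ) (ψ 1) * ψ 1 = 1 := by
    simpa [dotProduct, Fin.sum_univ_two] using hψ
  have hnr : (ψ 0).re^2 + (ψ 0).im^2 + (ψ 1).re^2 + (ψ 1).im^2 = 1 := by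
    have := congrArg Complex.re e1
    simp only [Complex.add_re, Complex.mul_re, Complex.conj_re, Complex.conj_im,
      Complex.one_re] at this
    linear_combination this
  have hcomp := completeness ψ ψ' hψ hψ' horth
  have hρ2 : ρ = (1 - l) • (1 : Matrix (Fin 2) (Fin 2) ℂ) + (2*l - 1) • outer ψ := by
    rw [hρ, ← hcomp]; module
  set x : ℝ := (ψ 0 * (starRingEnd ℂ) (ψ 1)).re with hxdef
  set y : ℝ := (ψ 0 * (starRingEnd ℂ) (ψ 1)).im with hydef
  have hprod : x^2 + y^2 = ((ψ 0).re^2 + (ψ 0).im^2) * ((ψ 1).re^2 + (ψ 1).im^2) := by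
    rw [hxdef, hydef]
    simp only [Complex.mul_re, Complex.mul_im, Complex.conj_re, Complex.conj_im]
    ring
  have hxC : ψ 0 * (starRingEnd ℂ) (ψ 1) + (starRingEnd ℂ) (ψ 0) * ψ 1 = 2*(x:ℂ) := by
    have := Complex.add_conj (ψ 0 * (starRingEnd ℂ) (ψ 1))
    rw [RingHom.map_mul, Complex.conj_conj] at this
    rw [hxdef]; push_cast at this ⊢; linear_combination this
  have hyC : ψ 0 * (starRingEnd ℂ) (ψ 1) - (starRingEnd ℂ) (ψ 0) * ψ 1
      = 2*(y:ℂ)*Complex.I := by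
    have := Complex.sub_conj (ψ 0 * (starRingEnd ℂ) (ψ 1))
    rw [RingHom.map_mul, Complex.conj_conj] at this
    rw [hydef]; push_cast at this ⊢; linear_combination this
  have hI : Complex.I ^ 2 = -1 := Complex.I_sq
  -- entries of ρ
  have entries : ∀ i j, ((1 - l) • (1 : Matrix (Fin 2) (Fin 2) ℂ)
      + (2*l - 1) • outer ψ) i j
      = ((1 - l : ℝ) : ℂ) * (if i = j then 1 else 0)
        + ((2*l - 1 : ℝ) : ℂ) * (ψ i * (starRingEnd ℂ) (ψ j)) := by
    intro i j
    simp [outer, vecMulVec, Matrix.one_apply, Complex.real_smul]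
  -- the four probabilities
  have c0 : star (phiv 0) ⬝ᵥ ρ.mulVec (phiv 0) = ((1/2 + (2*l-1)*x : ℝ) : ℂ) := by
    rw [hρ2, quad]
    rw [entries 0 0, entries 1 1, entries 0 1, entries 1 0]
    push_cast
    norm_num
    linear_combination ((2*l-1)/2) * e1 + ((2*l-1)/2) * hxC
  have c1 : star (phiv 1) ⬝ᵥ ρ.mulVec (phiv 1) = ((1/2 - (2*l-1)*y : ℝ) : ℂ) := by
    rw [hρ2, quad]
    rw [entries 0 0, entries 1 1, entries 0 1, entries 1 0]
    push_cast
    norm_num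
    linear_combination ((2*l-1)/2) * e1 + ((2*l-1)/2 * Complex.I) * hyC
      + ((2*l-1) * (y:ℂ)) * hI
  have c2 : star (phiv 2) ⬝ᵥ ρ.mulVec (phiv 2) = ((1/2 - (2*l-1)*x : ℝ) : ℂ) := by
    rw [hρ2, quad]
    rw [entries 0 0, entries 1 1, entries 0 1, entries 1 0]
    push_cast
    norm_num
    linear_combination ((2*l-1)/2) * e1 - ((2*l-1)/2) * hxC
  have c3 : star (phiv 3) ⬝ᵥ ρ.mulVec (phiv 3) = ((1/2 + (2*l-1)*y : ℝ) : ℂ) := by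
    rw [hρ2, quad]
    simp only [show ((3:Fin 4):ℕ) = 3 from rfl]
    rw [entries 0 0, entries 1 1, entries 0 1, entries 1 0]
    push_cast
    norm_num
    linear_combination ((2*l-1)/2) * e1 + ((2*l-1)/2 * Complex.I^3) * hyC
      + ((2*l-1) * (y:ℂ) * (Complex.I^2 - 1)) * hI
      + (Complex.I * (ψ 0 * (starRingEnd ℂ) (ψ 1) - (starRingEnd ℂ) (ψ 0) * ψ 1)
        * (1/2 - (l:ℂ))) * hI
  have hp0 : pk ρ 0 = 1/4 + (2*l-1)*x/2 := by
    rw [pk, c0, Complex.ofReal_re]; ring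
  have hp1 : pk ρ 1 = 1/4 - (2*l-1)*y/2 := by
    rw [pk, c1, Complex.ofReal_re]; ring
  have hp2 : pk ρ 2 = 1/4 - (2*l-1)*x/2 := by
    rw [pk, c2, Complex.ofReal_re]; ring
  have hp3 : pk ρ 3 = 1/4 + (2*l-1)*y/2 := by
    rw [pk, c3, Complex.ofReal_re]; ring
  -- from here on, work with the real parameters t, x, y only
  clear hρ hcomp hψ hψ' horth e1 hxC hyC hI c0 c1 c2 c3
  set t : ℝ := 2*l - 1 with ht
  clear_value x y
  have hxy : x^2 + y^2 ≤ 1/4 := by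
    rw [hprod]
    nlinarith [sq_nonneg ((ψ 0).re^2 + (ψ 0).im^2 - (ψ 1).re^2 - (ψ 1).im^2)]
  have hlog2 : (0:ℝ) < Real.log 2 := Real.log_pos (by norm_num)
  have hH : H4 ρ - binEnt l = 1 +
      ((Real.binEntropy (1/2 + t*x) - Real.binEntropy (1/2 + t/2))
        + (Real.binEntropy (1/2 + t*y) - Real.binEntropy (1/2 + t/2)))
        / (2 * Real.log 2) := by
    have hl' : l = 1/2 + t/2 := by rw [ht]; ring
    have hbl : binEnt l = Real.binEntropy (1/2 + t/2) / Real.log 2 := by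
      rw [binEnt_eq, hl']
    have hsum : H4 ρ = ent2 (pk ρ 0) + ent2 (pk ρ 1) + ent2 (pk ρ 2) + ent2 (pk ρ 3) := by
      rw [H4, Fin.sum_univ_four]
    rw [hsum, hp0, hp1, hp2, hp3, hbl]
    have P1 := pair_sum (t*x/2)
    have P2 := pair_sum (t*y/2)
    rw [show (1:ℝ)/4 + t*x/2 = 1/4 + (t*x/2) by ring,
        show (1:ℝ)/4 - t*x/2 = 1/4 - (t*x/2) by ring,
        show (1:ℝ)/4 + t*y/2 = 1/4 + (t*y/2) by ring,
        show (1:ℝ)/4 - t*y/2 = 1/4 - (t*y/2) by ring]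
    have hrw : ∀ a b c d : ℝ, a + b + c + d = (a + c) + (d + b) := by intros; ring
    rw [hrw, P1, P2]
    rw [show (1:ℝ)/2 + 2*(t*x/2) = 1/2 + t*x by ring,
        show (1:ℝ)/2 + 2*(t*y/2) = 1/2 + t*y by ring]
    field_simp
    ring
  clear_value t
  have htle : |t| ≤ 1 := by rw [abs_le]; constructor <;> rw [ht] <;> linarith
  have hxle : |x| ≤ 1/2 := by rw [abs_le]; constructor <;> nlinarith [sq_nonneg y]
  have hyle : |y| ≤ 1/2 := by rw [abs_le]; constructor <;> nlinarith [sq_nonneg x]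
  have htx : |t*x| ≤ |t/2| := by
    rw [abs_mul, abs_div, abs_two]
    nlinarith [abs_nonneg t]
  have hty : |t*y| ≤ |t/2| := by
    rw [abs_mul, abs_div, abs_two]
    nlinarith [abs_nonneg t]
  have ht2 : |t/2| ≤ 1/2 := by rw [abs_div, abs_two]; linarith
  have hb1 : Real.binEntropy (1/2 + t/2) ≤ Real.binEntropy (1/2 + t*x) :=
    bE_mono _ _ htx ht2
  have hb2 : Real.binEntropy (1/2 + t/2) ≤ Real.binEntropy (1/2 + t*y) :=
    bE_mono _ _ hty ht2
  have hge : 1 ≤ H4 ρ - binEnt l := by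
    rw [hH]
    have : 0 ≤ ((Real.binEntropy (1/2 + t*x) - Real.binEntropy (1/2 + t/2))
        + (Real.binEntropy (1/2 + t*y) - Real.binEntropy (1/2 + t/2)))
        / (2 * Real.log 2) := by
      apply div_nonneg (by linarith) (by linarith)
    linarith
  have heqt : H4 ρ - binEnt l = 1 ↔ t = 0 := by
    constructor
    · intro h
      by_contra htne
      have htpos : 0 < |t| := abs_pos.mpr htne
      have hone : |x| < 1/2 ∨ |y| < 1/2 := by
        by_contra hcon
        push_neg at hcon
        obtain ⟨h1', h2'⟩ := hcon
        nlinarith [sq_abs x, sq_abs y]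
      have hstrict : Real.binEntropy (1/2 + t/2) < Real.binEntropy (1/2 + t*x)
          ∨ Real.binEntropy (1/2 + t/2) < Real.binEntropy (1/2 + t*y) := by
        rcases hone with hx' | hy'
        · left
          apply bE_strict _ _ _ ht2
          rw [abs_mul, abs_div, abs_two]
          nlinarith
        · right
          apply bE_strict _ _ _ ht2
          rw [abs_mul, abs_div, abs_two]
          nlinarith
      have hgt : 1 < H4 ρ - binEnt l := by
        rw [hH]
        have hnum : 0 < (Real.binEntropy (1/2 + t*x) - Real.binEntropy (1/2 + t/2))
            + (Real.binEntropy (1/2 + t*y) - Real.binEntropy (1/2 + t/2)) := by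
          rcases hstrict with h' | h' <;> linarith
        have : 0 < ((Real.binEntropy (1/2 + t*x) - Real.binEntropy (1/2 + t/2))
            + (Real.binEntropy (1/2 + t*y) - Real.binEntropy (1/2 + t/2)))
            / (2 * Real.log 2) := by positivity
        linarith
      linarith
    · intro h
      rw [hH, h]
      norm_num
  have hrhot : ρ = (1 / 2 : ℂ) • (1 : Matrix (Fin 2) (Fin 2) ℂ) ↔ t = 0 := by
    constructor
    · intro h
      by_contra htne
      have h00 := congrFun (congrFun (hρ2.symm.trans h) 0) 0
      have h11 := congrFun (congrFun (hρ2.symm.trans h) 1) 1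
      have h01 := congrFun (congrFun (hρ2.symm.trans h) 0) 1
      rw [entries 0 0] at h00
      rw [entries 1 1] at h11
      rw [entries 0 1] at h01
      simp [Matrix.one_apply] at h00 h11 h01
      rcases h01 with h' | h' | h'
      · exact htne h'
      · rw [h'] at h00
        have := congrArg Complex.re h00
        simp at this
        apply htne
        rw [ht]; linarith
      · rw [h'] at h11
        have := congrArg Complex.re h11
        simp at this
        apply htne
        rw [ht]; linarith
    · intro h
      have hl2 : l = 1/2 := by
        have := ht.symm.trans h
        linarith
      rw [hρ2, h, hl2]
      ext i j
      by_cases hij : i = j <;>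
        simp [hij, Matrix.one_apply, Complex.real_smul] <;> norm_num
  refine ⟨⟨hge, heqt.trans hrhot.symm⟩, ?_⟩
  intro h
  rw [h] at hge
  linarith
end

section
/- Let U_max = (1/√2)·(|0⟩(⟨0|+⟨1|) + |1⟩(⟨0|−⟨1|)) be the Hadamard unitary and let ρ₊ = |+⟩⟨+| with |+⟩ = (|0⟩+|1⟩)/√2. Then H[{p_k(U_max ρ₊ U_max†)}] = 2 and H[{p_k(ρ₊)}] = 3/2, so the unitary channel ρ ↦ U_max ρ U_max† increases the POVM-based coherence C_{E,r} of the pure state ρ₊ by exactly 1/2, saturating the bound 1/2 on the coherence increase achievable by unitary channels. -/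
open Matrix ComplexOrder

/-- The Hadamard unitary `U_max`. -/
noncomputable def Umax : Matrix (Fin 2) (Fin 2) ℂ :=
  ((1 : ℂ) / Real.sqrt 2) • !![1, 1; 1, -1]

/-- The state `|+⟩ = (|0⟩ + |1⟩)/√2`. -/
noncomputable def plusv : Fin 2 → ℂ :=
  ![(1 : ℂ) / Real.sqrt 2, (1 : ℂ) / Real.sqrt 2]

section aux

lemma s2c_aux : ((Real.sqrt 2 : ℝ) : ℂ) * ((Real.sqrt 2 : ℝ) : ℂ) = 2 := by
  norm_cast
  rw [Real.mul_self_sqrt (by norm_num : (0:ℝ) ≤ 2)]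

lemma h2_aux : (((Real.sqrt 2 : ℝ) : ℂ))⁻¹ * (((Real.sqrt 2 : ℝ) : ℂ))⁻¹ = 2⁻¹ := by
  rw [← mul_inv, s2c_aux]

lemma hUrho_aux : Umax * outer plusv * Umaxᴴ = !![1,0;0,0] := by
  have h2 := h2_aux
  have h4 : (((Real.sqrt 2 : ℝ) : ℂ))⁻¹ ^ 4 = (4:ℂ)⁻¹ := by
    have e : (((Real.sqrt 2 : ℝ) : ℂ))⁻¹ ^ 4
        = ((((Real.sqrt 2 : ℝ) : ℂ))⁻¹ * (((Real.sqrt 2 : ℝ) : ℂ))⁻¹) ^ 2 := by ring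
    rw [e, h2]; norm_num
  unfold Umax outer plusv vecMulVec
  ext i j
  fin_cases i <;> fin_cases j <;>
    simp [vecMulVec_apply, mul_apply, Fin.sum_univ_two, conjTranspose_apply,
      Matrix.vecMul, dotProduct, Pi.smul_apply, smul_eq_mul,
      Pi.star_apply, Complex.star_def, Complex.conj_ofReal, map_inv₀] <;>
    ring_nf <;> simp [h2, h4, vecHead, vecTail, show (((Real.sqrt 2 : ℝ) : ℂ)) ^ 2 = 2 by rw [sq, s2c_aux]] <;> norm_num

lemma ent2_zero : ent2 0 = 0 := by simp [ent2]
lemma ent2_one : ent2 1 = 0 := by simp [ent2]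
lemma ent2_half_s16 : ent2 (1/2) = 1/2 := by
  have : Real.logb 2 (1/2) = -1 := by
    rw [one_div, Real.logb_inv, Real.logb_self_eq_one] <;> norm_num
  rw [ent2, this]; norm_num
lemma ent2_quarter : ent2 (1/4) = 1/2 := by
  have : Real.logb 2 (1/4) = -2 := by
    rw [show (1/4:ℝ) = (((2:ℝ)^(2:ℕ)))⁻¹ by norm_num, Real.logb_inv, Real.logb_pow,
      Real.logb_self_eq_one] <;> norm_num
  rw [ent2, this]; norm_num

lemma pk00 : ∀ k, pk !![1,0;0,0] k = 1/4 := by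
  have h2 : ((Real.sqrt 2 : ℝ))⁻¹ * ((Real.sqrt 2 : ℝ))⁻¹ = 2⁻¹ := by
    rw [← mul_inv, Real.mul_self_sqrt (by norm_num : (0:ℝ) ≤ 2)]
  intro k
  fin_cases k <;>
    simp [pk, phiv, Matrix.mulVec, dotProduct, Fin.sum_univ_two,
      Pi.star_apply, Complex.star_def, Complex.conj_ofReal, map_inv₀,
      Complex.div_re, Complex.normSq, Complex.add_re, Complex.mul_re, h2] <;>
    nlinarith [Real.mul_self_sqrt (show (0:ℝ) ≤ 2 by norm_num)]

lemma pkplus : pk (outer plusv) 0 = 1/2 ∧ pk (outer plusv) 1 = 1/4 ∧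
    pk (outer plusv) 2 = 0 ∧ pk (outer plusv) 3 = 1/4 := by
  have h2 : ((Real.sqrt 2 : ℝ))⁻¹ * ((Real.sqrt 2 : ℝ))⁻¹ = 2⁻¹ := by
    rw [← mul_inv, Real.mul_self_sqrt (by norm_num : (0:ℝ) ≤ 2)]
  have hne : Real.sqrt 2 ≠ 0 := by positivity
  refine ⟨?_, ?_, ?_, ?_⟩ <;>
    simp [pk, phiv, outer, plusv, vecMulVec_apply, Matrix.mulVec, dotProduct,
      Fin.sum_univ_two, Pi.star_apply, Complex.star_def, Complex.conj_ofReal, map_inv₀,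
      show ((0 : Fin 4) : ℕ) = 0 from rfl, show ((1 : Fin 4) : ℕ) = 1 from rfl,
      show ((2 : Fin 4) : ℕ) = 2 from rfl, show ((3 : Fin 4) : ℕ) = 3 from rfl,
      pow_succ, pow_zero, Complex.I_re, Complex.I_im, Complex.neg_re, Complex.neg_im,
      Complex.mul_im, Complex.div_re, Complex.add_re, Complex.mul_re, h2, vecHead, vecTail] <;>
    (field_simp
     try nlinarith [Real.mul_self_sqrt (show (0:ℝ) ≤ 2 by norm_num), Real.sqrt_nonneg 2,
       Real.sqrt_pos.mpr (show (0:ℝ) < 2 by norm_num)])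

end aux

theorem stmt16 :
    H4 (Umax * outer plusv * Umaxᴴ) = 2 ∧ H4 (outer plusv) = 3 / 2 ∧
      H4 (Umax * outer plusv * Umaxᴴ) - H4 (outer plusv) = 1 / 2 := by
  obtain ⟨q0, q1, q2, q3⟩ := pkplus
  have hA : H4 (Umax * outer plusv * Umaxᴴ) = 2 := by
    rw [hUrho_aux, H4, Fin.sum_univ_four, pk00, pk00, pk00, pk00, ent2_quarter]
    norm_num
  have hB : H4 (outer plusv) = 3 / 2 := by
    rw [H4, Fin.sum_univ_four, q0, q1, q2, q3, ent2_half_s16, ent2_quarter, ent2_zero]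
    norm_num
  exact ⟨hA, hB, by rw [hA, hB]; norm_num⟩
end
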